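/- A line not passing through the center of inversion is inverted into a circle through the center (with the center itself removed): let O be a point of the Euclidean plane, r > 0, and let ℓ be an affine line (one-dimensional affine subspace) with O ∉ ℓ. Then there exist a point Q' and s' > 0 such that O lies on the circle with center Q' and radius s' and the image of ℓ under the inversion with center O and radius r equals that circle with the point O removed. -/

import Mathlib

open EuclideanGeometry

theorem inversion_line_to_circle (O : EuclideanSpace ℝ (Fin 2)) (r : ℝ) (hr : 0 < r)
    (ℓ : AffineSubspace ℝ (EuclideanSpace ℝ (Fin 2)))
    (hdim : Module.finrank ℝ ℓ.direction = 1) (hO : O ∉ ℓ) :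
    ∃ (Q' : EuclideanSpace ℝ (Fin 2)) (s' : ℝ), 0 < s' ∧ dist Q' O = s' ∧
      inversion O r '' (ℓ : Set (EuclideanSpace ℝ (Fin 2))) =
        {P | dist Q' P = s'} \ {O} := by
  have hne : (ℓ : Set (EuclideanSpace ℝ (Fin 2))).Nonempty := by
    rcases ℓ.eq_bot_or_nonempty with h | h
    · exfalso
      rw [h, AffineSubspace.direction_bot] at hdim
      simp at hdim
    · exact h
  haveI : Nonempty ℓ := hne.to_subtype
  set p := (EuclideanGeometry.orthogonalProjection ℓ O : EuclideanSpace ℝ (Fin 2)) with hp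
  have hpℓ : p ∈ ℓ := (EuclideanGeometry.orthogonalProjection ℓ O).2
  have hpO : p ≠ O := fun h => hO (h ▸ hpℓ)
  have hv : p -ᵥ O ≠ 0 := vsub_ne_zero.2 hpO
  set y : EuclideanSpace ℝ (Fin 2) := (2:ℝ) • (p -ᵥ O) +ᵥ O with hy
  have h2 : y -ᵥ O = (2:ℝ) • (p -ᵥ O) := vadd_vsub _ _
  have hyO : y ≠ O := by
    intro h
    apply hv
    have h0 : y -ᵥ O = 0 := by rw [h, vsub_self]
    rw [h2] at h0
    exact (smul_eq_zero.mp h0).resolve_left (by norm_num)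
  have hspan : (ℝ ∙ (y -ᵥ O)) = ℝ ∙ (p -ᵥ O) := by
    rw [h2, Submodule.span_singleton_smul_eq (by norm_num : (2:ℝ) ≠ 0).isUnit]
  have hperp : p -ᵥ O ∈ ℓ.directionᗮ := by
    have h1 := EuclideanGeometry.orthogonalProjection_vsub_mem_direction_orthogonal ℓ O
    have h3 := Submodule.neg_mem _ h1
    rwa [neg_vsub_eq_vsub_rev] at h3
  have hdir : ℓ.direction = (ℝ ∙ (p -ᵥ O))ᗮ := by
    have hle : ℓ.direction ≤ (ℝ ∙ (p -ᵥ O))ᗮ := by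
      intro w hw
      rw [Submodule.mem_orthogonal]
      rintro u hu
      rw [Submodule.mem_span_singleton] at hu
      obtain ⟨a, rfl⟩ := hu
      have h0 : inner ℝ (p -ᵥ O) w = (0:ℝ) := by
        rw [real_inner_comm]
        exact (Submodule.mem_orthogonal _ _).1 hperp w hw
      rw [real_inner_smul_left, h0, mul_zero]
    refine Submodule.eq_of_le_of_finrank_eq hle ?_
    rw [hdim]
    have h1 : Module.finrank ℝ (ℝ ∙ (p -ᵥ O)) = 1 := finrank_span_singleton hv
    have h4 := Submodule.finrank_add_finrank_orthogonal (K := ℝ ∙ (p -ᵥ O))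
    have htot : Module.finrank ℝ (EuclideanSpace ℝ (Fin 2)) = 2 := by simp
    omega
  have hmid : p = midpoint ℝ O y := by
    have hm : midpoint ℝ O y -ᵥ O = p -ᵥ O := by
      rw [midpoint_vsub_left, h2, smul_smul]
      norm_num
    exact (vsub_left_cancel hm).symm
  have hline : ℓ = AffineSubspace.perpBisector O y := by
    have hd : ℓ.direction = (AffineSubspace.perpBisector O y).direction := by
      rw [AffineSubspace.direction_perpBisector, hspan, hdir]
    exact AffineSubspace.ext_of_direction_eq hd
      ⟨p, hpℓ, hmid ▸ AffineSubspace.midpoint_mem_perpBisector O y⟩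
  refine ⟨inversion O r y, r ^ 2 / dist y O, ?_, dist_inversion_center O y r, ?_⟩
  · exact div_pos (pow_pos hr 2) (dist_pos.2 hyO)
  · rw [hline, image_inversion_perpBisector hr.ne' hyO]
    congr 1
    ext P
    rw [Metric.mem_sphere, Set.mem_setOf_eq, dist_comm]
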